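/- arXiv:2011.01487 — 9 statements merged into one kernel-verified Lean document; each statement's English description precedes it below -/
import Mathlib

section
/- Let a, b, c, d, e > 0 be real numbers with d·e ≥ 2abc and d+e ≥ max{ a+b+c, (ab+bc+ca+2(a+b+c)−1−2abc)/2, 2(ab+bc+ca)−3abc }. Then for every integer n ≥ 1, the cubic expression U(n) = n²(d+n−1)(e+n−1) − (n+1)(a+n−1)(b+n−1)(c+n−1) is nonnegative. -/
theorem U_nonneg (a b c d e : ℝ) (ha : 0 < a) (hb : 0 < b) (hc : 0 < c)
    (hd : 0 < d) (he : 0 < e) (hde : d * e ≥ 2 * a * b * c)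
    (hsum : d + e ≥ max (max (a + b + c)
      ((a * b + b * c + c * a + 2 * (a + b + c) - 1 - 2 * a * b * c) / 2))
      (2 * (a * b + b * c + c * a) - 3 * a * b * c)) :
    ∀ n : ℕ, 1 ≤ n →
      0 ≤ (n : ℝ)^2 * (d + n - 1) * (e + n - 1) -
        (n + 1) * (a + n - 1) * (b + n - 1) * (c + n - 1) := by
  intro n hn
  have hm : (0:ℝ) ≤ (n : ℝ) - 1 := by
    have : (1:ℝ) ≤ (n : ℝ) := by exact_mod_cast hn
    linarith
  have h1 : a + b + c ≤ d + e :=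
    le_trans (le_trans (le_max_left _ _) (le_max_left _ _)) hsum
  have h2 : (a * b + b * c + c * a + 2 * (a + b + c) - 1 - 2 * a * b * c) / 2 ≤ d + e :=
    le_trans (le_trans (le_max_right _ _) (le_max_left _ _)) hsum
  have h3 : 2 * (a * b + b * c + c * a) - 3 * a * b * c ≤ d + e :=
    le_trans (le_max_right _ _) hsum
  have c3 : 0 ≤ d + e - (a + b + c) := by linarith
  have c2 : 0 ≤ d * e + 2 * (d + e) + 1 - (a * b + b * c + c * a) - 2 * (a + b + c) := by
    linarith
  have c1 : 0 ≤ 2 * (d * e) + (d + e) - a * b * c - 2 * (a * b + b * c + c * a) := by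
    linarith
  have c0 : 0 ≤ d * e - 2 * (a * b * c) := by linarith
  nlinarith [mul_nonneg (mul_nonneg (mul_nonneg hm hm) hm) c3,
    mul_nonneg (mul_nonneg hm hm) c2, mul_nonneg hm c1, c0]
end

section
/- Let a, b, c, d, e > 0 be real numbers with d·e ≥ 2abc and d+e ≥ max{ a+b+c, (ab+bc+ca+2(a+b+c)−1−2abc)/2, 2(ab+bc+ca)−3abc }. Define A_1 = 1 and A_n = ((a)_{n−1}(b)_{n−1}(c)_{n−1})/((d)_{n−1}(e)_{n−1}(n−1)!) for n ≥ 2. Then the sequence (n·A_n)_{n≥1} is nonincreasing, i.e., n A_n ≥ (n+1) A_{n+1} for all n ≥ 1. -/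
lemma key_ineq (a b c d e t : ℝ) (ha : 0 < a) (hb : 0 < b) (hc : 0 < c)
    (hde : d * e ≥ 2 * a * b * c)
    (h1 : d + e ≥ a + b + c)
    (h2 : d + e ≥ (a * b + b * c + c * a + 2 * (a + b + c) - 1 - 2 * a * b * c) / 2)
    (h3 : d + e ≥ 2 * (a * b + b * c + c * a) - 3 * a * b * c)
    (ht : 0 ≤ t) :
    (t + 2) * ((a + t) * (b + t) * (c + t)) ≤ (t + 1) ^ 2 * ((d + t) * (e + t)) := by
  nlinarith [mul_nonneg (mul_nonneg ht ht) ht, mul_nonneg ht ht,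
    mul_nonneg (mul_nonneg ht ht) (sub_nonneg.2 h1),
    mul_nonneg ht (sub_nonneg.2 (div_le_iff₀ (by norm_num : (0:ℝ) < 2) |>.mp h2)),
    mul_nonneg ht (sub_nonneg.2 h3), mul_nonneg ht (sub_nonneg.2 hde),
    mul_pos ha hb, mul_pos hb hc, mul_pos ha hc]

theorem nAn_nonincreasing (a b c d e : ℝ) (ha : 0 < a) (hb : 0 < b) (hc : 0 < c)
    (hd : 0 < d) (he : 0 < e) (hde : d * e ≥ 2 * a * b * c)
    (hsum : d + e ≥ max (max (a + b + c)
      ((a * b + b * c + c * a + 2 * (a + b + c) - 1 - 2 * a * b * c) / 2))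
      (2 * (a * b + b * c + c * a) - 3 * a * b * c))
    (A : ℕ → ℝ)
    (hA : ∀ n : ℕ, 1 ≤ n → A n =
      ((ascPochhammer ℝ (n - 1)).eval a * (ascPochhammer ℝ (n - 1)).eval b *
        (ascPochhammer ℝ (n - 1)).eval c) /
      ((ascPochhammer ℝ (n - 1)).eval d * (ascPochhammer ℝ (n - 1)).eval e *
        (Nat.factorial (n - 1) : ℝ))) :
    ∀ n : ℕ, 1 ≤ n → ((n : ℝ) + 1) * A (n + 1) ≤ (n : ℝ) * A n := by
  have h1 : d + e ≥ a + b + c := le_trans (le_max_left _ _ |>.trans (le_max_left _ _)) hsum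
  have h2 : d + e ≥ (a * b + b * c + c * a + 2 * (a + b + c) - 1 - 2 * a * b * c) / 2 :=
    le_trans (le_max_right _ _ |>.trans (le_max_left _ _)) hsum
  have h3 : d + e ≥ 2 * (a * b + b * c + c * a) - 3 * a * b * c :=
    le_trans (le_max_right _ _) hsum
  rintro n hn
  obtain ⟨m, rfl⟩ : ∃ m, n = m + 1 := ⟨n - 1, by omega⟩
  have e1 := hA (m + 1) (by omega)
  have e2 := hA (m + 2) (by omega)
  simp only [Nat.add_sub_cancel] at e1
  have hm2 : m + 2 - 1 = m + 1 := by omega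
  rw [hm2] at e2
  set Pa := (ascPochhammer ℝ m).eval a with hPa
  set Pb := (ascPochhammer ℝ m).eval b
  set Pc := (ascPochhammer ℝ m).eval c
  set Pd := (ascPochhammer ℝ m).eval d
  set Pe := (ascPochhammer ℝ m).eval e
  have hPa0 : 0 < Pa := ascPochhammer_pos m a ha
  have hPb0 : 0 < Pb := ascPochhammer_pos m b hb
  have hPc0 : 0 < Pc := ascPochhammer_pos m c hc
  have hPd0 : 0 < Pd := ascPochhammer_pos m d hd
  have hPe0 : 0 < Pe := ascPochhammer_pos m e he
  have hF0 : (0:ℝ) < (Nat.factorial m : ℝ) := by positivity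
  rw [ascPochhammer_succ_eval, ascPochhammer_succ_eval, ascPochhammer_succ_eval,
    ascPochhammer_succ_eval, ascPochhammer_succ_eval] at e2
  have hfac : ((Nat.factorial (m + 1) : ℝ)) = (m + 1) * (Nat.factorial m : ℝ) := by
    rw [Nat.factorial_succ]; push_cast; ring
  rw [hfac] at e2
  rw [e1, e2]
  have hm0 : (0:ℝ) ≤ (m:ℝ) := Nat.cast_nonneg m
  have key := key_ineq a b c d e (m : ℝ) ha hb hc hde h1 h2 h3 hm0
  have hamt : 0 < a + (m:ℝ) := by linarith
  have hbmt : 0 < b + (m:ℝ) := by linarith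
  have hcmt : 0 < c + (m:ℝ) := by linarith
  have hdmt : 0 < d + (m:ℝ) := by linarith
  have hemt : 0 < e + (m:ℝ) := by linarith
  have hden1 : (0:ℝ) < Pd * (d + m) * (Pe * (e + m)) * ((m + 1) * (Nat.factorial m : ℝ)) := by
    positivity
  have hden2 : (0:ℝ) < Pd * Pe * (Nat.factorial m : ℝ) := by positivity
  push_cast
  rw [mul_div_assoc', mul_div_assoc', div_le_div_iff₀ hden1 hden2]
  have hC : (0:ℝ) ≤ Pa * Pb * Pc * (Pd * Pe) * (Nat.factorial m : ℝ) := by positivity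
  have hfin := mul_le_mul_of_nonneg_left key hC
  ring_nf at hfin ⊢
  linarith [hfin]
end

section
/- Let a, b, c, d, e > 0 be real numbers with d·e ≥ 3abc and d+e ≥ max{ a+b+c, (2(ab+bc+ca)+3(a+b+c)−6abc−1)/3, 3(ab+bc+ca)−7abc }. Then for every integer n ≥ 1, the expression X(n) = (2n−1)·n·(d+n−1)(e+n−1) − (2n+1)(a+n−1)(b+n−1)(c+n−1) is nonnegative. -/
theorem X_nonneg (a b c d e : ℝ) (ha : 0 < a) (hb : 0 < b) (hc : 0 < c)
    (hd : 0 < d) (he : 0 < e) (hde : d * e ≥ 3 * a * b * c)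
    (hsum : d + e ≥ max (max (a + b + c)
      ((2 * (a * b + b * c + c * a) + 3 * (a + b + c) - 6 * a * b * c - 1) / 3))
      (3 * (a * b + b * c + c * a) - 7 * a * b * c)) :
    ∀ n : ℕ, 1 ≤ n →
      0 ≤ (2 * (n : ℝ) - 1) * n * (d + n - 1) * (e + n - 1) -
        (2 * n + 1) * (a + n - 1) * (b + n - 1) * (c + n - 1) := by
  intro n hn
  have hn1 : (1:ℝ) ≤ (n:ℝ) := by exact_mod_cast hn
  have h1 : a + b + c ≤ d + e :=
    le_trans (le_trans (le_max_left _ _) (le_max_left _ _)) hsum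
  have h2 : (2 * (a * b + b * c + c * a) + 3 * (a + b + c) - 6 * a * b * c - 1) / 3 ≤ d + e :=
    le_trans (le_trans (le_max_right _ _) (le_max_left _ _)) hsum
  have h3 : 3 * (a * b + b * c + c * a) - 7 * a * b * c ≤ d + e :=
    le_trans (le_max_right _ _) hsum
  have h2' : 2 * (a * b + b * c + c * a) + 3 * (a + b + c) - 6 * a * b * c - 1 ≤ 3 * (d + e) := by
    linarith
  set s : ℝ := (n : ℝ) - 1 with hs
  have hs0 : 0 ≤ s := by simp [hs]; linarith
  have ta : 0 ≤ s * s * s * (d + e - (a + b + c)) :=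
    mul_nonneg (mul_nonneg (mul_nonneg hs0 hs0) hs0) (by linarith)
  have tb : 0 ≤ s * s * (3 * (d + e) - (2 * (a * b + b * c + c * a) + 3 * (a + b + c) - 6 * a * b * c - 1)) :=
    mul_nonneg (mul_nonneg hs0 hs0) (by linarith)
  have tc : 0 ≤ s * (d + e - (3 * (a * b + b * c + c * a) - 7 * a * b * c)) :=
    mul_nonneg hs0 (by linarith)
  have td : 0 ≤ (2 * s * s + 3 * s + 1) * (d * e - 3 * (a * b * c)) :=
    mul_nonneg (by nlinarith) (by linarith)
  have hnn : (n : ℝ) = s + 1 := by simp [hs]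
  rw [hnn]
  nlinarith [ta, tb, tc, td]
end

section
/- Let a, b, c, d, e > 0 be real numbers with d·e ≥ 3abc and d+e ≥ max{ a+b+c, (2(ab+bc+ca)+3(a+b+c)−6abc−1)/3, 3(ab+bc+ca)−7abc }. Define A_{2n−1} = ((a)_{n−1}(b)_{n−1}(c)_{n−1})/((d)_{n−1}(e)_{n−1}(n−1)!) for n ≥ 1. Then the sequence ((2n−1)·A_{2n−1})_{n≥1} is nonincreasing. -/
set_option maxHeartbeats 1000000


theorem odd_coeff_nonincreasing (a b c d e : ℝ) (ha : 0 < a) (hb : 0 < b) (hc : 0 < c)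
    (hd : 0 < d) (he : 0 < e) (hde : d * e ≥ 3 * a * b * c)
    (hsum : d + e ≥ max (max (a + b + c)
      ((2 * (a * b + b * c + c * a) + 3 * (a + b + c) - 6 * a * b * c - 1) / 3))
      (3 * (a * b + b * c + c * a) - 7 * a * b * c))
    (A : ℕ → ℝ)
    (hA : ∀ n : ℕ, 1 ≤ n → A (2 * n - 1) =
      ((ascPochhammer ℝ (n - 1)).eval a * (ascPochhammer ℝ (n - 1)).eval b *
        (ascPochhammer ℝ (n - 1)).eval c) /
      ((ascPochhammer ℝ (n - 1)).eval d * (ascPochhammer ℝ (n - 1)).eval e *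
        (Nat.factorial (n - 1) : ℝ))) :
    ∀ n : ℕ, 1 ≤ n →
      (2 * ((n : ℝ) + 1) - 1) * A (2 * (n + 1) - 1) ≤ (2 * (n : ℝ) - 1) * A (2 * n - 1) := by
  intro n hn
  obtain ⟨m, rfl⟩ : ∃ m, n = m + 1 := ⟨n - 1, by omega⟩
  have hA1 := hA (m + 1) (by omega)
  have hA2 := hA (m + 1 + 1) (by omega)
  simp only [Nat.add_sub_cancel] at hA1 hA2
  rw [hA1, hA2]
  set k : ℝ := (m : ℝ) with hkdef
  have hk : 0 ≤ k := Nat.cast_nonneg m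
  set Pa := (ascPochhammer ℝ m).eval a with hPadef
  set Pb := (ascPochhammer ℝ m).eval b with hPbdef
  set Pc := (ascPochhammer ℝ m).eval c with hPcdef
  set Pd := (ascPochhammer ℝ m).eval d with hPddef
  set Pe := (ascPochhammer ℝ m).eval e with hPedef
  have hPa : 0 < Pa := ascPochhammer_pos m a ha
  have hPb : 0 < Pb := ascPochhammer_pos m b hb
  have hPc : 0 < Pc := ascPochhammer_pos m c hc
  have hPd : 0 < Pd := ascPochhammer_pos m d hd
  have hPe : 0 < Pe := ascPochhammer_pos m e he
  have hfa : (0:ℝ) < (Nat.factorial m : ℝ) := by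
    exact_mod_cast Nat.factorial_pos m
  have eva : (ascPochhammer ℝ (m + 1)).eval a = Pa * (a + k) := by
    simp [ascPochhammer_succ_right, hPadef, hkdef]
  have evb : (ascPochhammer ℝ (m + 1)).eval b = Pb * (b + k) := by
    simp [ascPochhammer_succ_right, hPbdef, hkdef]
  have evc : (ascPochhammer ℝ (m + 1)).eval c = Pc * (c + k) := by
    simp [ascPochhammer_succ_right, hPcdef, hkdef]
  have evd : (ascPochhammer ℝ (m + 1)).eval d = Pd * (d + k) := by
    simp [ascPochhammer_succ_right, hPddef, hkdef]
  have eve : (ascPochhammer ℝ (m + 1)).eval e = Pe * (e + k) := by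
    simp [ascPochhammer_succ_right, hPedef, hkdef]
  have hfac : ((m + 1).factorial : ℝ) = (k + 1) * (Nat.factorial m : ℝ) := by
    rw [Nat.factorial_succ]
    push_cast
    ring
  rw [eva, evb, evc, evd, eve, hfac]
  -- extract the three hypotheses from the max
  have h1 : a + b + c ≤ d + e :=
    le_trans (le_trans (le_max_left _ _) (le_max_left _ _)) hsum
  have h2 : (2 * (a * b + b * c + c * a) + 3 * (a + b + c) - 6 * a * b * c - 1) / 3 ≤ d + e :=
    le_trans (le_trans (le_max_right _ _) (le_max_left _ _)) hsum
  have h3 : 3 * (a * b + b * c + c * a) - 7 * a * b * c ≤ d + e :=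
    le_trans (le_max_right _ _) hsum
  -- key polynomial inequality
  have key : (2 * k + 3) * ((a + k) * (b + k) * (c + k)) ≤
      (2 * k + 1) * (k + 1) * ((d + k) * (e + k)) := by
    have p3 : 0 ≤ ((d + e) - (a + b + c)) * (k * k * k) :=
      mul_nonneg (by linarith) (by positivity)
    have p2 : 0 ≤ (3 * (d + e) + 2 * (d * e) + 1 -
        (2 * (a * b + b * c + c * a) + 3 * (a + b + c))) * (k * k) :=
      mul_nonneg (by linarith) (by positivity)
    have p1 : 0 ≤ (3 * (d * e) + (d + e) -
        (2 * (a * b * c) + 3 * (a * b + b * c + c * a))) * k :=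
      mul_nonneg (by linarith) hk
    have p0 : 0 ≤ d * e - 3 * (a * b * c) := by linarith
    have expand : (2 * k + 1) * (k + 1) * ((d + k) * (e + k)) -
        (2 * k + 3) * ((a + k) * (b + k) * (c + k)) =
        2 * (((d + e) - (a + b + c)) * (k * k * k)) +
        (3 * (d + e) + 2 * (d * e) + 1 -
          (2 * (a * b + b * c + c * a) + 3 * (a + b + c))) * (k * k) +
        (3 * (d * e) + (d + e) -
          (2 * (a * b * c) + 3 * (a * b + b * c + c * a))) * k +
        (d * e - 3 * (a * b * c)) := by ring
    linarith [p3, p2, p1, p0, expand]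
  have hden1 : (0:ℝ) < Pd * (d + k) * (Pe * (e + k)) * ((k + 1) * (Nat.factorial m : ℝ)) := by
    have : 0 < d + k := by linarith
    have : 0 < e + k := by linarith
    positivity
  have hden2 : (0:ℝ) < Pd * Pe * (Nat.factorial m : ℝ) := by positivity
  rw [mul_div_assoc', mul_div_assoc', div_le_div_iff₀ hden1 hden2]
  have hC : (0:ℝ) ≤ Pa * Pb * Pc * (Pd * Pe * (Nat.factorial m : ℝ)) := by positivity
  have hmul := mul_le_mul_of_nonneg_right key hC
  push_cast
  nlinarith [hmul]
end

section
/- Let a, b, c, d, e > 0 be real numbers and define for n ≥ 1 the quantity U(n) = n(d+n−1)(e+n−1) − (a+n−1)(b+n−1)(c+n−1). If d+e ≥ ab+bc+ca − abc and d·e ≥ abc, then U(n) ≥ U(1) = de − abc ≥ 0 for all n ≥ 1, assuming additionally d+e ≥ a+b+c−1 (so that the coefficient of n² in U is nonnegative) and de+d+e ≥ ab+bc+ca (so that U is nondecreasing after linearization). -/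
theorem alexander_U_nonneg (a b c d e : ℝ) (ha : 0 < a) (hb : 0 < b) (hc : 0 < c)
    (hd : 0 < d) (he : 0 < e)
    (h1 : d + e ≥ a * b + b * c + c * a - a * b * c)
    (h2 : d * e ≥ a * b * c)
    (h3 : d + e ≥ a + b + c - 1)
    (h4 : d * e + d + e ≥ a * b + b * c + c * a) :
    ∀ n : ℕ, 1 ≤ n →
      (n : ℝ) * (d + n - 1) * (e + n - 1) - (a + n - 1) * (b + n - 1) * (c + n - 1)
        ≥ d * e - a * b * c ∧ d * e - a * b * c ≥ 0 := by
  intro n hn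
  have ht : (1 : ℝ) ≤ (n : ℝ) := by exact_mod_cast hn
  constructor
  · nlinarith [sq_nonneg ((n : ℝ) - 1), mul_nonneg (sub_nonneg.2 ht) (sub_nonneg.2 ht),
      mul_nonneg (sub_nonneg.2 ht) (sub_nonneg.2 h4), mul_nonneg (mul_nonneg (sub_nonneg.2 ht) (sub_nonneg.2 ht)) (sub_nonneg.2 h3)]
  · linarith
end

section
/- Let a, b, c, d, e > 0 be real numbers with d+e ≥ a+b+c−1, de+d+e ≥ ab+bc+ca, d+e ≥ ab+bc+ca−abc, and de ≥ abc. Define A_n = ((a)_{n−1}(b)_{n−1}(c)_{n−1})/(n·(d)_{n−1}(e)_{n−1}(n−1)!) for n ≥ 1 (so A_1 = 1). Then the sequence (n A_n)_{n≥1} is nonincreasing. -/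
theorem alexander_nAn_nonincreasing (a b c d e : ℝ) (ha : 0 < a) (hb : 0 < b) (hc : 0 < c)
    (hd : 0 < d) (he : 0 < e)
    (h1 : d + e ≥ a + b + c - 1)
    (h2 : d * e + d + e ≥ a * b + b * c + c * a)
    (h3 : d + e ≥ a * b + b * c + c * a - a * b * c)
    (h4 : d * e ≥ a * b * c)
    (A : ℕ → ℝ)
    (hA : ∀ n : ℕ, 1 ≤ n → A n =
      ((ascPochhammer ℝ (n - 1)).eval a * (ascPochhammer ℝ (n - 1)).eval b *
        (ascPochhammer ℝ (n - 1)).eval c) /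
      ((n : ℝ) * ((ascPochhammer ℝ (n - 1)).eval d * (ascPochhammer ℝ (n - 1)).eval e *
        (Nat.factorial (n - 1) : ℝ)))) :
    ∀ n : ℕ, 1 ≤ n → ((n : ℝ) + 1) * A (n + 1) ≤ (n : ℝ) * A n := by
  intro n hn
  obtain ⟨m, rfl⟩ : ∃ m, n = m + 1 := ⟨n - 1, (Nat.succ_pred_eq_of_pos hn).symm⟩
  have hA1 := hA (m + 1) (by omega)
  have hA2 := hA (m + 2) (by omega)
  have e1 : m + 1 - 1 = m := by omega
  have e2 : m + 2 - 1 = m + 1 := by omega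
  rw [e1] at hA1
  rw [e2, ascPochhammer_succ_eval, ascPochhammer_succ_eval, ascPochhammer_succ_eval,
    ascPochhammer_succ_eval, ascPochhammer_succ_eval, Nat.factorial_succ] at hA2
  push_cast at hA1 hA2
  set M : ℝ := (m : ℝ) with hMdef
  have hM : 0 ≤ M := Nat.cast_nonneg m
  set Pa := (ascPochhammer ℝ m).eval a with hPa
  set Pb := (ascPochhammer ℝ m).eval b with hPb
  set Pc := (ascPochhammer ℝ m).eval c with hPc
  set Pd := (ascPochhammer ℝ m).eval d with hPd
  set Pe := (ascPochhammer ℝ m).eval e with hPe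
  have hPa0 : 0 < Pa := ascPochhammer_pos m a ha
  have hPb0 : 0 < Pb := ascPochhammer_pos m b hb
  have hPc0 : 0 < Pc := ascPochhammer_pos m c hc
  have hPd0 : 0 < Pd := ascPochhammer_pos m d hd
  have hPe0 : 0 < Pe := ascPochhammer_pos m e he
  have hF0 : 0 < (Nat.factorial m : ℝ) := by positivity
  have key : (a + M) * (b + M) * (c + M) ≤ (M + 1) * ((d + M) * (e + M)) := by
    nlinarith [mul_nonneg (mul_nonneg hM hM) (by linarith : (0:ℝ) ≤ d + e + 1 - (a + b + c)),
      mul_nonneg hM (by linarith : (0:ℝ) ≤ d * e + d + e - (a * b + b * c + c * a))]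
  have cast1 : ((m + 1 : ℕ) : ℝ) = M + 1 := by push_cast; ring
  have cast2 : ((m + 2 : ℕ) : ℝ) = M + 2 := by push_cast; ring
  rw [hA1, hA2]
  set F := (Nat.factorial m : ℝ)
  have hden1 : 0 < Pd * Pe * F := by positivity
  have hden2 : 0 < (M + 2) * (Pd * (d + M) * (Pe * (e + M)) * ((M + 1) * F)) := by
    positivity
  have hMM : (M : ℝ) + 2 ≠ 0 := by positivity
  have hM1 : (M : ℝ) + 1 ≠ 0 := by positivity
  have lhs_eq : (M + 1 + 1) *
      (Pa * (a + M) * (Pb * (b + M)) * (Pc * (c + M)) /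
        ((M + 2) * (Pd * (d + M) * (Pe * (e + M)) * ((M + 1) * F)))) =
      Pa * (a + M) * (Pb * (b + M)) * (Pc * (c + M)) /
        (Pd * (d + M) * (Pe * (e + M)) * ((M + 1) * F)) := by
    field_simp
    ring
  have rhs_eq : (M + 1) * (Pa * Pb * Pc / ((M + 1) * (Pd * Pe * F))) =
      Pa * Pb * Pc / (Pd * Pe * F) := by
    field_simp
  rw [cast1, lhs_eq, rhs_eq]
  rw [div_le_div_iff₀ (by positivity) (by positivity)]
  have hN : 0 ≤ Pa * Pb * Pc * (Pd * Pe * F) := by positivity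
  calc Pa * (a + M) * (Pb * (b + M)) * (Pc * (c + M)) * (Pd * Pe * F)
      = Pa * Pb * Pc * (Pd * Pe * F) * ((a + M) * (b + M) * (c + M)) := by ring
    _ ≤ Pa * Pb * Pc * (Pd * Pe * F) * ((M + 1) * ((d + M) * (e + M))) :=
        mul_le_mul_of_nonneg_left key hN
    _ = Pa * Pb * Pc * (Pd * (d + M) * (Pe * (e + M)) * ((M + 1) * F)) := by ring
end

section
/- Suppose f(z) = z + Σ_{n≥2} A_n zⁿ is analytic on the unit disk with real coefficients satisfying 1 ≥ 2A₂ ≥ 3A₃ ≥ ⋯ ≥ n A_n ≥ ⋯ ≥ 0. Then Re( (1−z) f′(z) ) > 0 for all z in the unit disk, i.e., f is close-to-convex with respect to −log(1−z). -/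
open Complex

theorem ozaki_close_to_convex (A : ℕ → ℝ)
    (hpos : ∀ n, 2 ≤ n → 0 ≤ A n)
    (h1 : 2 * A 2 ≤ 1)
    (hmono : ∀ n : ℕ, 2 ≤ n → ((n : ℝ) + 1) * A (n + 1) ≤ (n : ℝ) * A n)
    (f : ℂ → ℂ)
    (hf : ∀ z ∈ Metric.ball (0 : ℂ) 1, f z = z + ∑' n : ℕ, (A (n + 2) : ℂ) * z ^ (n + 2)) :
    ∀ z ∈ Metric.ball (0 : ℂ) 1, 0 < ((1 - z) * deriv f z).re := by
  -- coefficients of f'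
  set d : ℕ → ℝ := fun n => ((n : ℝ) + 2) * A (n + 2) with hd
  have hdpos : ∀ n, 0 ≤ d n := by
    intro n
    have := hpos (n + 2) (by omega)
    positivity
  have hdmono : ∀ n, d (n + 1) ≤ d n := by
    intro n
    have := hmono (n + 2) (by omega)
    push_cast at this ⊢
    convert this using 2 <;> push_cast <;> ring
  have hd1 : ∀ n, d n ≤ 1 := by
    intro n
    induction n with
    | zero => simpa [hd] using h1
    | succ k ih => exact (hdmono k).trans ih
  set e : ℕ → ℝ := fun n => Nat.rec (1 - d 0) (fun k _ => d k - d (k + 1)) n with he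
  have he0 : e 0 = 1 - d 0 := rfl
  have heS : ∀ n, e (n + 1) = d n - d (n + 1) := fun n => rfl
  have hepos : ∀ n, 0 ≤ e n := by
    intro n
    cases n with
    | zero => rw [he0]; linarith [hd1 0]
    | succ k => rw [heS]; linarith [hdmono k]
  have he1 : ∀ n, e n ≤ 1 := by
    intro n
    cases n with
    | zero => rw [he0]; linarith [hdpos 0]
    | succ k => rw [heS]; linarith [hd1 k, hdpos (k + 1)]
  have hesum : ∀ N, ∑ n ∈ Finset.range (N + 1), e n = 1 - d N := by
    intro N
    induction N with
    | zero => simp [he0]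
    | succ k ih => rw [Finset.sum_range_succ, ih, heS]; ring
  have hesum' : ∀ N, ∑ n ∈ Finset.range N, e n ≤ 1 := by
    intro N
    cases N with
    | zero => simp
    | succ k => rw [hesum k]; linarith [hdpos k]
  have heSummable : Summable e := summable_of_sum_range_le hepos hesum'
  have heTsum : ∑' n, e n ≤ 1 := Real.tsum_le_of_sum_range_le hepos hesum'
  intro z hz
  rw [Metric.mem_ball, dist_zero_right] at hz
  -- summability helpers
  have geo : Summable fun n : ℕ => ‖z‖ ^ (n + 1) :=
    ((summable_geometric_of_lt_one (norm_nonneg z) hz).mul_left ‖z‖).congr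
      (by intro n; rw [pow_succ, mul_comm])
  have Sd : Summable fun n : ℕ => (d n : ℂ) * z ^ (n + 1) := by
    apply Summable.of_norm_bounded geo
    intro n
    rw [norm_mul, norm_pow, Complex.norm_real, Real.norm_of_nonneg (hdpos n)]
    nlinarith [hd1 n, pow_nonneg (norm_nonneg z) (n + 1), hdpos n]
  have SdQ : Summable fun n : ℕ => (d n : ℂ) * z ^ (n + 2) := by
    simpa [pow_succ, mul_assoc] using Sd.mul_right z
  have SdP : Summable fun n : ℕ => (d (n + 1) : ℂ) * z ^ (n + 2) := by
    exact Sd.comp_injective (add_left_injective 1)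
  have Se : Summable fun n : ℕ => (e n : ℂ) * z ^ (n + 1) := by
    apply Summable.of_norm_bounded geo
    intro n
    rw [norm_mul, norm_pow, Complex.norm_real, Real.norm_of_nonneg (hepos n)]
    nlinarith [he1 n, pow_nonneg (norm_nonneg z) (n + 1), hepos n]
  -- the derivative of f at z
  set r : ℝ := (‖z‖ + 1) / 2 with hr
  have hzr : ‖z‖ < r := by rw [hr]; linarith
  have hr0 : 0 ≤ r := by positivity
  have hr1 : r < 1 := by rw [hr]; linarith
  have hderiv : HasDerivAt (fun y : ℂ => ∑' n : ℕ, (A (n + 2) : ℂ) * y ^ (n + 2))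
      (∑' n : ℕ, (d n : ℂ) * z ^ (n + 1)) z := by
    apply hasDerivAt_tsum_of_isPreconnected
      (u := fun n : ℕ => r ^ (n + 1))
      (g' := fun n y => (d n : ℂ) * y ^ (n + 1))
      (t := Metric.ball (0 : ℂ) r) (y₀ := 0)
    · exact ((summable_geometric_of_lt_one hr0 hr1).mul_left r).congr
        (by intro n; rw [pow_succ, mul_comm])
    · exact Metric.isOpen_ball
    · exact (convex_ball (0 : ℂ) r).isPreconnected
    · intro n y _
      have h := ((hasDerivAt_pow (n + 2) y).const_mul ((A (n + 2) : ℂ)))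
      refine h.congr_deriv ?_
      push_cast [hd]
      ring_nf
    · intro n y hy
      rw [Metric.mem_ball, dist_zero_right] at hy
      rw [norm_mul, norm_pow, Complex.norm_real, Real.norm_of_nonneg (hdpos n)]
      calc d n * ‖y‖ ^ (n + 1) ≤ 1 * r ^ (n + 1) := by
            apply mul_le_mul (hd1 n) (pow_le_pow_left₀ (norm_nonneg y) hy.le _)
              (by positivity) one_pos.le
        _ = r ^ (n + 1) := one_mul _
    · exact Metric.mem_ball_self (by positivity)
    · apply summable_of_ne_finset_zero (s := ∅)
      intro n _
      simp
    · rwa [Metric.mem_ball, dist_zero_right]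
  have hfd : deriv f z = 1 + ∑' n : ℕ, (d n : ℂ) * z ^ (n + 1) := by
    have heq : f =ᶠ[nhds z] fun y => y + ∑' n : ℕ, (A (n + 2) : ℂ) * y ^ (n + 2) := by
      have hmem : Metric.ball (0 : ℂ) 1 ∈ nhds z :=
        Metric.isOpen_ball.mem_nhds (by rwa [Metric.mem_ball, dist_zero_right])
      filter_upwards [hmem] with y hy using hf y hy
    rw [heq.deriv_eq]
    exact ((hasDerivAt_id z).add hderiv).deriv
  -- key identity
  set S1 : ℂ := ∑' n : ℕ, (d n : ℂ) * z ^ (n + 1) with hS1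
  set P : ℂ := ∑' n : ℕ, (d (n + 1) : ℂ) * z ^ (n + 2) with hP
  set Q : ℂ := ∑' n : ℕ, (d n : ℂ) * z ^ (n + 2) with hQ
  set T : ℂ := ∑' n : ℕ, (e n : ℂ) * z ^ (n + 1) with hT
  have hS1eq : S1 = (d 0 : ℂ) * z + P := by
    rw [hS1, Summable.tsum_eq_zero_add Sd]
    simp [hP]
  have hzS1 : z * S1 = Q := by
    rw [hS1, hQ, ← tsum_mul_left]
    congr 1
    funext n
    ring
  have hTeq : T = (1 - (d 0 : ℂ)) * z + (Q - P) := by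
    rw [hT, Summable.tsum_eq_zero_add Se]
    congr 1
    · rw [he0]; push_cast; ring
    · rw [← Summable.tsum_sub SdQ SdP]
      congr 1
      funext n
      rw [heS]
      push_cast
      ring
  have key : (1 - z) * deriv f z = 1 - T := by
    rw [hfd, hTeq]
    have : (1 - z) * (1 + S1) = 1 + S1 - z - z * S1 := by ring
    rw [this, hzS1, hS1eq]
    ring
  rw [key]
  -- real part bound
  have hTre : T.re ≤ ‖z‖ := by
    rw [hT, Complex.re_tsum Se]
    have hb : ∀ n : ℕ, ((e n : ℂ) * z ^ (n + 1)).re ≤ e n * ‖z‖ := by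
      intro n
      calc ((e n : ℂ) * z ^ (n + 1)).re ≤ ‖(e n : ℂ) * z ^ (n + 1)‖ := Complex.re_le_norm _
        _ = e n * ‖z‖ ^ (n + 1) := by
            rw [norm_mul, norm_pow, Complex.norm_real, Real.norm_of_nonneg (hepos n)]
        _ ≤ e n * ‖z‖ := by
            apply mul_le_mul_of_nonneg_left _ (hepos n)
            calc ‖z‖ ^ (n + 1) ≤ ‖z‖ ^ 1 :=
                  pow_le_pow_of_le_one (norm_nonneg z) hz.le (by omega)
              _ = ‖z‖ := pow_one _
    calc (∑' n, ((e n : ℂ) * z ^ (n + 1)).re) ≤ ∑' n, e n * ‖z‖ := by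
          apply Summable.tsum_le_tsum hb _ (heSummable.mul_right ‖z‖)
          · exact (Complex.hasSum_re Se.hasSum).summable
      _ = (∑' n, e n) * ‖z‖ := by rw [tsum_mul_right]
      _ ≤ 1 * ‖z‖ := by
          apply mul_le_mul_of_nonneg_right heTsum (norm_nonneg z)
      _ = ‖z‖ := one_mul _
  have : ((1 : ℂ) - T).re = 1 - T.re := by simp
  rw [this]
  linarith
end

section
/- Suppose f(z) = z + Σ_{n≥1} A_{2n+1} z^{2n+1} is an odd analytic function on the unit disk with real coefficients satisfying 1 ≥ 3A₃ ≥ 5A₅ ≥ ⋯ ≥ (2n+1)A_{2n+1} ≥ ⋯ ≥ 0. Then Re( (1−z²) f′(z) ) > 0 for all z in the unit disk, i.e., f is close-to-convex with respect to (1/2) log((1+z)/(1−z)). -/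
open Complex

/-- Summability of series `∑ Cₙ wⁿ⁺ᵐ`-type with bounded coefficients inside the unit disk. -/
lemma ozaki_aux_summable (C : ℕ → ℝ) (hC : ∀ n, |C n| ≤ 1) (w : ℂ) (hw : ‖w‖ < 1) (m : ℕ) :
    Summable (fun n : ℕ => (C n : ℂ) * w ^ (2 * n + m)) := by
  have hw0 : (0:ℝ) ≤ ‖w‖ := norm_nonneg w
  have hgeo : Summable (fun n : ℕ => ‖w‖ ^ m * (‖w‖ ^ 2) ^ n) :=
    (summable_geometric_of_lt_one (by positivity) (by nlinarith)).mul_left _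
  refine Summable.of_norm_bounded hgeo ?_
  intro n
  have : ‖(C n : ℂ) * w ^ (2 * n + m)‖ = |C n| * ‖w‖ ^ (2 * n + m) := by
    rw [norm_mul, norm_pow, Complex.norm_real, Real.norm_eq_abs]
  rw [this]
  have h1 : ‖w‖ ^ (2 * n + m) = ‖w‖ ^ m * (‖w‖ ^ 2) ^ n := by
    rw [← pow_mul, ← pow_add]; ring_nf
  rw [h1]
  have := hC n
  have hp : (0:ℝ) ≤ ‖w‖ ^ m * (‖w‖ ^ 2) ^ n := by positivity
  nlinarith [abs_nonneg (C n)]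

theorem ozaki_odd_close_to_convex (A : ℕ → ℝ)
    (hpos : ∀ n, 1 ≤ n → 0 ≤ A (2 * n + 1))
    (h1 : 3 * A 3 ≤ 1)
    (hmono : ∀ n : ℕ, 1 ≤ n →
      (2 * ((n : ℝ) + 1) + 1) * A (2 * (n + 1) + 1) ≤ (2 * (n : ℝ) + 1) * A (2 * n + 1))
    (f : ℂ → ℂ)
    (hf : ∀ z ∈ Metric.ball (0 : ℂ) 1,
      f z = z + ∑' n : ℕ, (A (2 * (n + 1) + 1) : ℂ) * z ^ (2 * (n + 1) + 1)) :
    ∀ z ∈ Metric.ball (0 : ℂ) 1, 0 < ((1 - z ^ 2) * deriv f z).re := by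
  -- the sequence B n = (2n+1) A_{2n+1}, with B 0 = 1
  set B : ℕ → ℝ := fun n => if n = 0 then 1 else (2 * (n : ℝ) + 1) * A (2 * n + 1) with hBdef
  have hB0 : B 0 = 1 := by simp [hBdef]
  have hBs : ∀ n : ℕ, B (n + 1) = (2 * ((n : ℝ) + 1) + 1) * A (2 * (n + 1) + 1) := by
    intro n
    simp only [hBdef, if_neg (Nat.succ_ne_zero n)]
    push_cast; ring_nf
  have hBnonneg : ∀ n, 0 ≤ B n := by
    intro n
    cases n with
    | zero => rw [hB0]; norm_num
    | succ m =>
      rw [hBs]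
      have := hpos (m + 1) (by omega)
      have : 0 ≤ A (2 * (m + 1) + 1) := this
      positivity
  have hBanti : ∀ n, B (n + 1) ≤ B n := by
    intro n
    cases n with
    | zero =>
      rw [hBs, hB0]
      norm_num
      linarith [h1]
    | succ m =>
      rw [hBs, hBs]
      have := hmono (m + 1) (by omega)
      push_cast at this ⊢
      linarith
  have hBle1 : ∀ n, B n ≤ 1 := by
    intro n
    induction n with
    | zero => rw [hB0]
    | succ m ih => exact le_trans (hBanti m) ih
  -- the difference sequence
  set d : ℕ → ℝ := fun n => B n - B (n + 1) with hddef
  have hd0 : ∀ n, 0 ≤ d n := fun n => sub_nonneg.mpr (hBanti n)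
  have hdsum_bound : ∀ N, ∑ i ∈ Finset.range N, d i ≤ 1 := by
    intro N
    have : ∑ i ∈ Finset.range N, d i = B 0 - B N := Finset.sum_range_sub' B N
    rw [this, hB0]
    linarith [hBnonneg N]
  have hdsummable : Summable d := summable_of_sum_range_le hd0 hdsum_bound
  have hdtsum : ∑' n, d n ≤ 1 := Summable.tsum_le_of_sum_range_le hdsummable hdsum_bound
  -- now the main argument
  intro z hz
  have hz1 : ‖z‖ < 1 := by simpa [Metric.mem_ball, dist_zero_right] using hz
  have hz0 : (0:ℝ) ≤ ‖z‖ := norm_nonneg z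
  -- coefficient bounds
  have hA_le : ∀ n : ℕ, |A (2 * (n + 1) + 1)| ≤ 1 := by
    intro n
    have h0 : 0 ≤ A (2 * (n + 1) + 1) := hpos (n + 1) (by omega)
    rw [_root_.abs_of_nonneg h0]
    have hb := hBle1 (n + 1)
    rw [hBs] at hb
    nlinarith [Nat.cast_nonneg (α := ℝ) n]
  have hB_abs : ∀ n : ℕ, |B (n + 1)| ≤ 1 := fun n =>
    abs_le.mpr ⟨by linarith [hBnonneg (n+1)], hBle1 (n+1)⟩
  have hd_abs : ∀ n : ℕ, |d n| ≤ 1 := by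
    intro n
    rw [_root_.abs_of_nonneg (hd0 n)]
    have := hBnonneg (n + 1); have := hBle1 n
    simp only [hddef]; linarith
  -- the series terms and their derivatives
  set g : ℕ → ℂ → ℂ := fun n x => (A (2 * (n + 1) + 1) : ℂ) * x ^ (2 * (n + 1) + 1) with hgdef
  set g' : ℕ → ℂ → ℂ := fun n x =>
    (((2 * (n + 1) + 1 : ℕ)) : ℂ) * (A (2 * (n + 1) + 1) : ℂ) * x ^ (2 * (n + 1)) with hg'def
  have hgderiv : ∀ n x, HasDerivAt (g n) (g' n x) x := by
    intro n x
    have h := (hasDerivAt_pow (2 * (n + 1) + 1) x).const_mul ((A (2 * (n + 1) + 1) : ℂ))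
    have he : 2 * (n + 1) + 1 - 1 = 2 * (n + 1) := by omega
    rw [he] at h
    exact h.congr_deriv (by simp only [hg'def]; ring)
  -- derivative of the tsum on a slightly smaller ball
  set r : ℝ := (‖z‖ + 1) / 2 with hrdef
  have hr0 : 0 < r := by positivity
  have hr1 : r < 1 := by simp only [hrdef]; linarith
  have hzr : ‖z‖ < r := by simp only [hrdef]; linarith
  have hzball : z ∈ Metric.ball (0:ℂ) r := by
    simpa [Metric.mem_ball, dist_zero_right] using hzr
  have husum : Summable (fun n : ℕ => r ^ 2 * (r ^ 2) ^ n) :=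
    (summable_geometric_of_lt_one (by positivity) (by nlinarith)).mul_left _
  have hg'bound : ∀ n : ℕ, ∀ x ∈ Metric.ball (0:ℂ) r, ‖g' n x‖ ≤ r ^ 2 * (r ^ 2) ^ n := by
    intro n x hx
    have hxr : ‖x‖ ≤ r := by
      have : ‖x‖ < r := by simpa [Metric.mem_ball, dist_zero_right] using hx
      linarith
    have hnorm : ‖g' n x‖ = ((2 * (n + 1) + 1 : ℕ) : ℝ) * |A (2 * (n + 1) + 1)| * ‖x‖ ^ (2 * (n + 1)) := by
      simp only [hg'def]
      rw [norm_mul, norm_mul, norm_pow, Complex.norm_natCast, Complex.norm_real,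
        Real.norm_eq_abs]
    rw [hnorm]
    have hA0 : 0 ≤ A (2 * (n + 1) + 1) := hpos (n + 1) (by omega)
    rw [_root_.abs_of_nonneg hA0]
    have hcoef : ((2 * (n + 1) + 1 : ℕ) : ℝ) * A (2 * (n + 1) + 1) = B (n + 1) := by
      rw [hBs]; push_cast; ring
    rw [hcoef]
    have hx2 : ‖x‖ ^ (2 * (n + 1)) ≤ r ^ (2 * (n + 1)) :=
      pow_le_pow_left₀ (norm_nonneg x) hxr _
    have hr2 : r ^ (2 * (n + 1)) = r ^ 2 * (r ^ 2) ^ n := by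
      rw [← pow_mul, ← pow_add]; ring_nf
    calc B (n + 1) * ‖x‖ ^ (2 * (n + 1)) ≤ 1 * r ^ (2 * (n + 1)) := by
          apply mul_le_mul (hBle1 (n+1)) hx2 (by positivity) (by norm_num)
    _ = r ^ 2 * (r ^ 2) ^ n := by rw [one_mul, hr2]
  have hg0sum : Summable (fun n => g n z) := by
    have := ozaki_aux_summable (fun n => A (2 * (n + 1) + 1)) hA_le z hz1 3
    refine this.congr fun n => ?_
    have he : 2 * n + 3 = 2 * (n + 1) + 1 := by omega
    simp only [hgdef, he]
  have hDtsum : HasDerivAt (fun w => ∑' n, g n w) (∑' n, g' n z) z :=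
    hasDerivAt_tsum_of_isPreconnected husum Metric.isOpen_ball
      (convex_ball (0:ℂ) r).isPreconnected
      (fun n y _ => hgderiv n y) hg'bound hzball hg0sum hzball
  -- derivative of f at z
  have hF : HasDerivAt (fun w => w + ∑' n, g n w) (1 + ∑' n, g' n z) z :=
    (hasDerivAt_id z).add hDtsum
  have hev : f =ᶠ[nhds z] (fun w => w + ∑' n, g n w) := by
    filter_upwards [Metric.isOpen_ball.mem_nhds hz] with w hw
    exact hf w hw
  have hderiv : deriv f z = 1 + ∑' n, g' n z := by
    rw [Filter.EventuallyEq.deriv_eq hev]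
    exact hF.deriv
  -- rewrite the derivative series with B coefficients
  have hg'eq : (∑' n, g' n z) = ∑' n : ℕ, (B (n + 1) : ℂ) * z ^ (2 * n + 2) := by
    apply tsum_congr
    intro n
    simp only [hg'def]
    have he : 2 * (n + 1) = 2 * n + 2 := by omega
    rw [he, hBs]
    push_cast
    ring
  -- summability facts over ℂ
  have hS1 : Summable (fun n : ℕ => (B (n + 1) : ℂ) * z ^ (2 * n + 2)) :=
    ozaki_aux_summable (fun n => B (n + 1)) hB_abs z hz1 2
  have hS2 : Summable (fun n : ℕ => (B (n + 1) : ℂ) * z ^ (2 * n + 4)) :=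
    ozaki_aux_summable (fun n => B (n + 1)) hB_abs z hz1 4
  have hSB : Summable (fun n : ℕ => (B n : ℂ) * z ^ (2 * n + 2)) :=
    ozaki_aux_summable (fun n => B n)
      (fun n => abs_le.mpr ⟨by linarith [hBnonneg n], hBle1 n⟩) z hz1 2
  have hSd : Summable (fun n : ℕ => (d n : ℂ) * z ^ (2 * n + 2)) :=
    ozaki_aux_summable d hd_abs z hz1 2
  -- the key algebraic identity
  have hkey : (1 - z ^ 2) * (1 + ∑' n : ℕ, (B (n + 1) : ℂ) * z ^ (2 * n + 2))
      = 1 - ∑' n : ℕ, (d n : ℂ) * z ^ (2 * n + 2) := by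
    have hmul : z ^ 2 * (∑' n : ℕ, (B (n + 1) : ℂ) * z ^ (2 * n + 2))
        = ∑' n : ℕ, (B (n + 1) : ℂ) * z ^ (2 * n + 4) := by
      rw [← tsum_mul_left]
      apply tsum_congr
      intro n
      ring
    have hzero : (∑' n : ℕ, (B n : ℂ) * z ^ (2 * n + 2))
        = (B 0 : ℂ) * z ^ 2 + ∑' n : ℕ, (B (n + 1) : ℂ) * z ^ (2 * n + 4) := by
      rw [Summable.tsum_eq_zero_add hSB]
      have h0 : (B 0 : ℂ) * z ^ (2 * 0 + 2) = (B 0 : ℂ) * z ^ 2 := by norm_num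
      have h1' : ∀ n : ℕ, (B (n + 1) : ℂ) * z ^ (2 * (n + 1) + 2)
          = (B (n + 1) : ℂ) * z ^ (2 * n + 4) := by
        intro n
        have : 2 * (n + 1) + 2 = 2 * n + 4 := by omega
        rw [this]
      rw [h0, tsum_congr h1']
    have hdiff : (∑' n : ℕ, (d n : ℂ) * z ^ (2 * n + 2))
        = (∑' n : ℕ, (B n : ℂ) * z ^ (2 * n + 2))
          - ∑' n : ℕ, (B (n + 1) : ℂ) * z ^ (2 * n + 2) := by
      rw [← Summable.tsum_sub hSB hS1]
      apply tsum_congr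
      intro n
      simp only [hddef]
      push_cast
      ring
    rw [hdiff, hzero, hB0]
    push_cast
    linear_combination -hmul
  -- put it together
  rw [hderiv, hg'eq, hkey]
  -- real part estimate
  have hre : ((1 : ℂ) - ∑' n : ℕ, (d n : ℂ) * z ^ (2 * n + 2)).re
      = 1 - ∑' n : ℕ, ((d n : ℂ) * z ^ (2 * n + 2)).re := by
    rw [Complex.sub_re, Complex.one_re, Complex.re_tsum hSd]
  rw [hre]
  have hterm : ∀ n : ℕ, ((d n : ℂ) * z ^ (2 * n + 2)).re ≤ d n * ‖z‖ ^ 2 := by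
    intro n
    calc ((d n : ℂ) * z ^ (2 * n + 2)).re ≤ ‖(d n : ℂ) * z ^ (2 * n + 2)‖ :=
          Complex.re_le_norm _
    _ = |d n| * ‖z‖ ^ (2 * n + 2) := by
          rw [norm_mul, norm_pow, Complex.norm_real, Real.norm_eq_abs]
    _ = d n * ‖z‖ ^ (2 * n + 2) := by rw [_root_.abs_of_nonneg (hd0 n)]
    _ ≤ d n * ‖z‖ ^ 2 := by
          apply mul_le_mul_of_nonneg_left _ (hd0 n)
          calc ‖z‖ ^ (2 * n + 2) = ‖z‖ ^ 2 * (‖z‖ ^ 2) ^ n := by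
                rw [← pow_mul, ← pow_add]; ring_nf
          _ ≤ ‖z‖ ^ 2 * 1 := by
                apply mul_le_mul_of_nonneg_left _ (by positivity)
                exact pow_le_one₀ (by positivity) (by nlinarith)
          _ = ‖z‖ ^ 2 := mul_one _
  have hsum_re : Summable (fun n : ℕ => ((d n : ℂ) * z ^ (2 * n + 2)).re) :=
    (Complex.hasSum_re hSd.hasSum).summable
  have hsum_bd : Summable (fun n : ℕ => d n * ‖z‖ ^ 2) := hdsummable.mul_right _
  have hle : (∑' n : ℕ, ((d n : ℂ) * z ^ (2 * n + 2)).re) ≤ ∑' n : ℕ, d n * ‖z‖ ^ 2 :=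
    Summable.tsum_le_tsum hterm hsum_re hsum_bd
  have heq : (∑' n : ℕ, d n * ‖z‖ ^ 2) = (∑' n, d n) * ‖z‖ ^ 2 := tsum_mul_right
  have hlt : (∑' n : ℕ, ((d n : ℂ) * z ^ (2 * n + 2)).re) < 1 := by
    have h2 : (∑' n, d n) * ‖z‖ ^ 2 ≤ 1 * ‖z‖ ^ 2 := by
      apply mul_le_mul_of_nonneg_right hdtsum (by positivity)
    have h3 : ‖z‖ ^ 2 < 1 := by nlinarith
    calc (∑' n : ℕ, ((d n : ℂ) * z ^ (2 * n + 2)).re) ≤ (∑' n, d n) * ‖z‖ ^ 2 := by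
          rw [← heq]; exact hle
    _ ≤ 1 * ‖z‖ ^ 2 := h2
    _ = ‖z‖ ^ 2 := one_mul _
    _ < 1 := h3
  linarith
end

section
/- Let a, b, c, d, e > 0 with de ≥ 2abc and d+e ≥ max{a+b+c, (ab+bc+ca+2(a+b+c)−1−2abc)/2, 2(ab+bc+ca)−3abc}. Then the function f(z) = z·₃F₂(a,b,c;d,e;z) satisfies Re((1−z)f′(z)) > 0 on the unit disk; in particular f is univalent (close-to-convex with respect to −log(1−z)). -/
open Complex

noncomputable def Acoef (a b c d e : ℝ) (n : ℕ) : ℝ :=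
  ((ascPochhammer ℝ n).eval a * (ascPochhammer ℝ n).eval b *
    (ascPochhammer ℝ n).eval c) /
    ((ascPochhammer ℝ n).eval d * (ascPochhammer ℝ n).eval e *
    (Nat.factorial n : ℝ))

noncomputable def Gcoef (a b c d e : ℝ) (n : ℕ) : ℝ := ((n:ℝ)+1) * Acoef a b c d e n

noncomputable def Ccoef (a b c d e : ℝ) (n : ℕ) : ℝ :=
  Gcoef a b c d e n - Gcoef a b c d e (n+1)

lemma Acoef_pos {a b c d e : ℝ} (ha : 0 < a) (hb : 0 < b) (hc : 0 < c)
    (hd : 0 < d) (he : 0 < e) (n : ℕ) : 0 < Acoef a b c d e n := by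
  have := ascPochhammer_pos n a ha
  have := ascPochhammer_pos n b hb
  have := ascPochhammer_pos n c hc
  have := ascPochhammer_pos n d hd
  have := ascPochhammer_pos n e he
  have hfac : (0:ℝ) < (Nat.factorial n : ℝ) := by
    exact_mod_cast Nat.factorial_pos n
  unfold Acoef
  positivity

lemma Acoef_zero (a b c d e : ℝ) : Acoef a b c d e 0 = 1 := by
  simp [Acoef]

lemma key_poly {a b c d e : ℝ} (ha : 0 < a) (hb : 0 < b) (hc : 0 < c)
    (hd : 0 < d) (he : 0 < e) (hde : d * e ≥ 2 * a * b * c)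
    (hsum : d + e ≥ max (max (a + b + c)
      ((a * b + b * c + c * a + 2 * (a + b + c) - 1 - 2 * a * b * c) / 2))
      (2 * (a * b + b * c + c * a) - 3 * a * b * c))
    (n : ℝ) (hn : 0 ≤ n) :
    (n+2)*((a+n)*((b+n)*(c+n))) ≤ (n+1)^2*((d+n)*(e+n)) := by
  have hs1 : a + b + c ≤ d + e := le_trans (le_max_of_le_left (le_max_left _ _)) hsum
  have hs2 : (a*b + b*c + c*a + 2*(a+b+c) - 1 - 2*a*b*c)/2 ≤ d + e :=
    le_trans (le_max_of_le_left (le_max_right _ _)) hsum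
  have hs3 : 2*(a*b+b*c+c*a) - 3*a*b*c ≤ d + e := le_trans (le_max_right _ _) hsum
  have hco3 : 0 ≤ (d+e) - (a+b+c) := by linarith
  have hco2 : 0 ≤ d*e + 2*(d+e) + 1 - (a*b+b*c+c*a) - 2*(a+b+c) := by linarith
  have hco1 : 0 ≤ 2*(d*e) + (d+e) - a*b*c - 2*(a*b+b*c+c*a) := by linarith
  have hco0 : 0 ≤ d*e - 2*(a*b*c) := by linarith
  nlinarith [mul_nonneg hco3 (pow_nonneg hn 3), mul_nonneg hco2 (sq_nonneg n),
    mul_nonneg hco1 hn]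

lemma Acoef_step {a b c d e : ℝ} (ha : 0 < a) (hb : 0 < b) (hc : 0 < c)
    (hd : 0 < d) (he : 0 < e) (hde : d * e ≥ 2 * a * b * c)
    (hsum : d + e ≥ max (max (a + b + c)
      ((a * b + b * c + c * a + 2 * (a + b + c) - 1 - 2 * a * b * c) / 2))
      (2 * (a * b + b * c + c * a) - 3 * a * b * c))
    (n : ℕ) :
    ((n:ℝ)+2) * Acoef a b c d e (n+1) ≤ ((n:ℝ)+1) * Acoef a b c d e n := by
  have hPa := ascPochhammer_pos n a ha
  have hPb := ascPochhammer_pos n b hb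
  have hPc := ascPochhammer_pos n c hc
  have hPd := ascPochhammer_pos n d hd
  have hPe := ascPochhammer_pos n e he
  have hfac : (0:ℝ) < (Nat.factorial n : ℝ) := by exact_mod_cast Nat.factorial_pos n
  set Pa := (ascPochhammer ℝ n).eval a with hPa'
  set Pb := (ascPochhammer ℝ n).eval b with hPb'
  set Pc := (ascPochhammer ℝ n).eval c with hPc'
  set Pd := (ascPochhammer ℝ n).eval d with hPd'
  set Pe := (ascPochhammer ℝ n).eval e with hPe'
  set F := ((Nat.factorial n : ℝ)) with hF'
  have hA : Acoef a b c d e n = Pa * Pb * Pc / (Pd * Pe * F) := rfl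
  have hA' : Acoef a b c d e (n+1) =
      (Pa*(a+n)) * (Pb*(b+n)) * (Pc*(c+n)) /
        ((Pd*(d+n)) * (Pe*(e+n)) * (((n:ℝ)+1) * F)) := by
    unfold Acoef
    rw [ascPochhammer_succ_eval, ascPochhammer_succ_eval, ascPochhammer_succ_eval,
      ascPochhammer_succ_eval, ascPochhammer_succ_eval, Nat.factorial_succ]
    rw [← hPa', ← hPb', ← hPc', ← hPd', ← hPe']
    push_cast
    rw [← hF']
  have had : 0 < a + (n:ℝ) := by positivity
  have hbd : 0 < b + (n:ℝ) := by positivity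
  have hcd : 0 < c + (n:ℝ) := by positivity
  have hdd : 0 < d + (n:ℝ) := by positivity
  have hed : 0 < e + (n:ℝ) := by positivity
  have hden1 : 0 < (Pd*(d+n)) * (Pe*(e+n)) * (((n:ℝ)+1) * F) := by positivity
  have hden2 : 0 < Pd * Pe * F := by positivity
  rw [hA, hA', ← mul_div_assoc, ← mul_div_assoc, div_le_div_iff₀ hden1 hden2]
  have key := key_poly ha hb hc hd he hde hsum (n : ℝ) (Nat.cast_nonneg n)
  have hnum : (0:ℝ) < Pa * Pb * Pc * (Pd * Pe * F) := by positivity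
  have h2 := mul_le_mul_of_nonneg_right key hnum.le
  calc ((n:ℝ)+2) * ((Pa*(a+n)) * (Pb*(b+n)) * (Pc*(c+n))) * (Pd * Pe * F)
      = ((n:ℝ)+2)*((a+n)*((b+n)*(c+n))) * (Pa * Pb * Pc * (Pd * Pe * F)) := by ring
    _ ≤ ((n:ℝ)+1)^2*((d+n)*(e+n)) * (Pa * Pb * Pc * (Pd * Pe * F)) := h2
    _ = ((n:ℝ)+1) * (Pa * Pb * Pc) * ((Pd*(d+n)) * (Pe*(e+n)) * (((n:ℝ)+1) * F)) := by ring

lemma Gcoef_zero (a b c d e : ℝ) : Gcoef a b c d e 0 = 1 := by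
  simp [Gcoef, Acoef_zero]

lemma Gcoef_antitone {a b c d e : ℝ} (ha : 0 < a) (hb : 0 < b) (hc : 0 < c)
    (hd : 0 < d) (he : 0 < e) (hde : d * e ≥ 2 * a * b * c)
    (hsum : d + e ≥ max (max (a + b + c)
      ((a * b + b * c + c * a + 2 * (a + b + c) - 1 - 2 * a * b * c) / 2))
      (2 * (a * b + b * c + c * a) - 3 * a * b * c))
    (n : ℕ) : Gcoef a b c d e (n+1) ≤ Gcoef a b c d e n := by
  have h := Acoef_step ha hb hc hd he hde hsum n
  unfold Gcoef
  push_cast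
  linarith

lemma Gcoef_le_one {a b c d e : ℝ} (ha : 0 < a) (hb : 0 < b) (hc : 0 < c)
    (hd : 0 < d) (he : 0 < e) (hde : d * e ≥ 2 * a * b * c)
    (hsum : d + e ≥ max (max (a + b + c)
      ((a * b + b * c + c * a + 2 * (a + b + c) - 1 - 2 * a * b * c) / 2))
      (2 * (a * b + b * c + c * a) - 3 * a * b * c))
    (n : ℕ) : Gcoef a b c d e n ≤ 1 := by
  induction n with
  | zero => simp [Gcoef_zero]
  | succ n ih => exact le_trans (Gcoef_antitone ha hb hc hd he hde hsum n) ih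

set_option maxHeartbeats 1000000 in
theorem hyp3F2_close_to_convex (a b c d e : ℝ) (ha : 0 < a) (hb : 0 < b) (hc : 0 < c)
    (hd : 0 < d) (he : 0 < e) (hde : d * e ≥ 2 * a * b * c)
    (hsum : d + e ≥ max (max (a + b + c)
      ((a * b + b * c + c * a + 2 * (a + b + c) - 1 - 2 * a * b * c) / 2))
      (2 * (a * b + b * c + c * a) - 3 * a * b * c))
    (f : ℂ → ℂ)
    (hf : ∀ z ∈ Metric.ball (0 : ℂ) 1,
      f z = z * ∑' n : ℕ,
        ((((ascPochhammer ℝ n).eval a * (ascPochhammer ℝ n).eval b *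
          (ascPochhammer ℝ n).eval c) /
          ((ascPochhammer ℝ n).eval d * (ascPochhammer ℝ n).eval e *
          (Nat.factorial n : ℝ))) : ℂ) * z ^ n) :
    ∀ z ∈ Metric.ball (0 : ℂ) 1, 0 < ((1 - z) * deriv f z).re := by
  intro z hz
  have hApos : ∀ n, 0 < Acoef a b c d e n := Acoef_pos ha hb hc hd he
  have hG1 : ∀ n : ℕ, ((n:ℝ)+1) * Acoef a b c d e n ≤ 1 := by
    intro n
    have h := Gcoef_le_one ha hb hc hd he hde hsum n
    unfold Gcoef at h
    exact h
  have hA1 : ∀ n, Acoef a b c d e n ≤ 1 := by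
    intro n
    have h := hG1 n
    nlinarith [(hApos n).le, Nat.cast_nonneg (α := ℝ) n]
  have hcoefbd : ∀ n : ℕ, ‖((((n:ℝ)+1) * Acoef a b c d e n : ℝ) : ℂ)‖ ≤ (n:ℝ)+1 := by
    intro n
    rw [Complex.norm_real, Real.norm_eq_abs, _root_.abs_of_pos (mul_pos (by positivity : (0:ℝ) < (n:ℝ)+1) (hApos n))]
    nlinarith [(hApos n).le, hG1 n, Nat.cast_nonneg (α := ℝ) n]
  have hzn : ‖z‖ < 1 := by simpa [Metric.mem_ball] using hz
  have hgeo : ∀ ρ : ℝ, 0 ≤ ρ → ρ < 1 → Summable (fun n : ℕ => ((n:ℝ)+1) * ρ^n) := by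
    intro ρ h0 h1
    have h2 : Summable (fun n : ℕ => (n:ℝ)^1 * ρ^n) :=
      summable_pow_mul_geometric_of_norm_lt_one 1 (by rwa [Real.norm_eq_abs, _root_.abs_of_nonneg h0])
    have h3 : Summable (fun n : ℕ => ρ^n) := summable_geometric_of_lt_one h0 h1
    exact (h2.add h3).congr (fun n => by ring)
  -- summability of the derivative term series at any point of the unit ball
  have hsummand : ∀ y : ℂ, ‖y‖ < 1 →
      Summable (fun n : ℕ => ((((n:ℝ)+1) * Acoef a b c d e n : ℝ) : ℂ) * y ^ n) := by
    intro y hy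
    apply Summable.of_norm_bounded (hgeo ‖y‖ (norm_nonneg y) hy)
    intro n
    rw [norm_mul, norm_pow]
    exact mul_le_mul_of_nonneg_right (hcoefbd n) (by positivity)
  set r : ℝ := (1 + ‖z‖) / 2 with hrdef
  have hr1 : r < 1 := by rw [hrdef]; linarith
  have hr0 : 0 ≤ r := by rw [hrdef]; positivity
  have hzr : z ∈ Metric.ball (0:ℂ) r := by
    simp only [Metric.mem_ball, dist_zero_right]
    rw [hrdef]; linarith
  -- derivative of the series
  have hderivF : HasDerivAt (fun y : ℂ => ∑' n : ℕ, ((Acoef a b c d e n : ℝ) : ℂ) * y ^ (n+1))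
      (∑' n : ℕ, ((((n:ℝ)+1) * Acoef a b c d e n : ℝ) : ℂ) * z ^ n) z := by
    apply hasDerivAt_tsum_of_isPreconnected
      (u := fun n : ℕ => ((n:ℝ)+1) * r ^ n)
      (g' := fun (n : ℕ) (y : ℂ) => ((((n:ℝ)+1) * Acoef a b c d e n : ℝ) : ℂ) * y ^ n)
      (y₀ := z) (hu := hgeo r hr0 hr1) (ht := Metric.isOpen_ball)
      (h't := (convex_ball (0:ℂ) r).isPreconnected) (hy₀ := hzr) (hy := hzr)
    · intro n y hy
      have h := (hasDerivAt_pow (n+1) y).const_mul ((Acoef a b c d e n : ℝ) : ℂ)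
      convert h using 1
      case e'_4 => rfl
      simp only [Nat.add_sub_cancel]
      push_cast
      try ring
    · intro n y hy
      simp only [Metric.mem_ball, dist_zero_right] at hy
      rw [norm_mul, norm_pow]
      have h2 : ‖y‖ ^ n ≤ r ^ n := pow_le_pow_left₀ (norm_nonneg y) hy.le n
      exact mul_le_mul (hcoefbd n) h2 (by positivity) (by positivity)
    · -- summability of the function series at z
      apply Summable.of_norm_bounded
        (summable_geometric_of_lt_one (norm_nonneg z) hzn)
      intro n
      rw [norm_mul, norm_pow, pow_succ]
      have h1 : ‖((Acoef a b c d e n : ℝ) : ℂ)‖ ≤ 1 := by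
        rw [Complex.norm_real, Real.norm_eq_abs, _root_.abs_of_pos (hApos n)]
        exact hA1 n
      have h2 : ‖z‖ ≤ 1 := hzn.le
      have h3 : (0:ℝ) ≤ ‖z‖ ^ n := pow_nonneg (norm_nonneg z) n
      have h4 : (0:ℝ) ≤ ‖((Acoef a b c d e n : ℝ):ℂ)‖ := norm_nonneg _
      nlinarith [mul_nonneg h3 (norm_nonneg z), mul_nonneg (sub_nonneg.2 h1) (mul_nonneg h3 (norm_nonneg z)), mul_nonneg h3 (sub_nonneg.2 h2)]
  -- f agrees with the series near z
  have hfF : ∀ y ∈ Metric.ball (0:ℂ) 1,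
      f y = ∑' n : ℕ, ((Acoef a b c d e n : ℝ) : ℂ) * y ^ (n+1) := by
    intro y hy
    rw [hf y hy, ← tsum_mul_left]
    apply tsum_congr
    intro n
    unfold Acoef
    push_cast
    rw [pow_succ]
    ring
  have hfeq : f =ᶠ[nhds z] (fun y => ∑' n : ℕ, ((Acoef a b c d e n : ℝ) : ℂ) * y ^ (n+1)) := by
    filter_upwards [Metric.isOpen_ball.mem_nhds hz] using hfF
  have hderivf : deriv f z = ∑' n : ℕ, ((((n:ℝ)+1) * Acoef a b c d e n : ℝ) : ℂ) * z ^ n :=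
    (hderivF.congr_of_eventuallyEq hfeq).deriv
  set S : ℂ := ∑' n : ℕ, ((((n:ℝ)+1) * Acoef a b c d e n : ℝ) : ℂ) * z ^ n with hSdef
  have hu : HasSum (fun n : ℕ => ((((n:ℝ)+1) * Acoef a b c d e n : ℝ) : ℂ) * z ^ n) S :=
    (hsummand z hzn).hasSum
  -- shifted sum
  have h0 : HasSum (fun n : ℕ => ((((n:ℝ)+1) * Acoef a b c d e n : ℝ) : ℂ) * z ^ n)
      ((S - 1) + ∑ i ∈ Finset.range 1,
        ((((i:ℝ)+1) * Acoef a b c d e i : ℝ) : ℂ) * z ^ i) := by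
    convert hu using 1
    simp [Acoef_zero]
  have hu1 : HasSum (fun n : ℕ => ((((n:ℝ)+2) * Acoef a b c d e (n+1) : ℝ) : ℂ) * z ^ (n+1))
      (S - 1) := by
    have heq : (fun n : ℕ => ((((n:ℝ)+2) * Acoef a b c d e (n+1) : ℝ) : ℂ) * z ^ (n+1)) =
        (fun n : ℕ => (fun m : ℕ =>
          ((((m:ℝ)+1) * Acoef a b c d e m : ℝ) : ℂ) * z ^ m) (n+1)) := by
      funext n
      simp only []
      push_cast
      ring
    rw [heq]
    exact (hasSum_nat_add_iff 1).2 h0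
  have hu2 : HasSum (fun n : ℕ => z * (((((n:ℝ)+1) * Acoef a b c d e n : ℝ) : ℂ) * z ^ n))
      (z * S) := hu.mul_left z
  have h4 : HasSum (fun n : ℕ => ((Ccoef a b c d e n : ℝ) : ℂ) * z ^ (n+1))
      (z * S - (S - 1)) := by
    have h := hu2.sub hu1
    have heq : (fun n : ℕ => z * (((((n:ℝ)+1) * Acoef a b c d e n : ℝ) : ℂ) * z ^ n) -
        ((((n:ℝ)+2) * Acoef a b c d e (n+1) : ℝ) : ℂ) * z ^ (n+1)) =
        (fun n : ℕ => ((Ccoef a b c d e n : ℝ) : ℂ) * z ^ (n+1)) := by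
      funext n
      unfold Ccoef Gcoef
      push_cast
      rw [pow_succ]
      ring
    rwa [heq] at h
  have hre : HasSum (fun n : ℕ => (((Ccoef a b c d e n : ℝ) : ℂ) * z ^ (n+1)).re)
      ((z * S - (S - 1)).re) := Complex.hasSum_re h4
  -- bounds on Ccoef
  have hCnonneg : ∀ n, 0 ≤ Ccoef a b c d e n := by
    intro n
    have := Gcoef_antitone ha hb hc hd he hde hsum n
    unfold Ccoef
    linarith
  have hCsum : ∀ N : ℕ, ∑ i ∈ Finset.range N, Ccoef a b c d e i ≤ 1 := by
    intro N
    have h := Finset.sum_range_sub' (Gcoef a b c d e) N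
    have hGN : 0 ≤ Gcoef a b c d e N :=
      (mul_pos (by positivity) (hApos N)).le
    calc ∑ i ∈ Finset.range N, Ccoef a b c d e i
        = Gcoef a b c d e 0 - Gcoef a b c d e N := h
      _ ≤ 1 := by rw [Gcoef_zero]; linarith
  have hCsummable : Summable (Ccoef a b c d e) := summable_of_sum_range_le hCnonneg hCsum
  have hCtsum : ∑' n, Ccoef a b c d e n ≤ 1 := Summable.tsum_le_of_sum_range_le hCsummable hCsum
  -- term-wise upper bound
  have hterm : ∀ n : ℕ, (((Ccoef a b c d e n : ℝ) : ℂ) * z ^ (n+1)).re ≤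
      Ccoef a b c d e n * ‖z‖ := by
    intro n
    have h1 : (((Ccoef a b c d e n : ℝ) : ℂ) * z ^ (n+1)).re ≤
        ‖((Ccoef a b c d e n : ℝ) : ℂ) * z ^ (n+1)‖ :=
      le_trans (le_abs_self _) (Complex.abs_re_le_norm _)
    have h2 : ‖((Ccoef a b c d e n : ℝ) : ℂ) * z ^ (n+1)‖ = Ccoef a b c d e n * ‖z‖ ^ (n+1) := by
      rw [norm_mul, norm_pow, Complex.norm_real, Real.norm_eq_abs,
        _root_.abs_of_nonneg (hCnonneg n)]
    have h3 : ‖z‖ ^ (n+1) ≤ ‖z‖ := by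
      calc ‖z‖ ^ (n+1) ≤ ‖z‖ ^ 1 :=
        pow_le_pow_of_le_one (norm_nonneg z) hzn.le (by omega)
      _ = ‖z‖ := pow_one _
    calc (((Ccoef a b c d e n : ℝ) : ℂ) * z ^ (n+1)).re
        ≤ Ccoef a b c d e n * ‖z‖ ^ (n+1) := by rw [← h2]; exact h1
      _ ≤ Ccoef a b c d e n * ‖z‖ := mul_le_mul_of_nonneg_left h3 (hCnonneg n)
  have hub : (z * S - (S - 1)).re ≤ ‖z‖ := by
    have hsum2 : Summable (fun n => Ccoef a b c d e n * ‖z‖) := hCsummable.mul_right _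
    have h5 := Summable.tsum_le_tsum hterm hre.summable hsum2
    rw [hre.tsum_eq] at h5
    calc (z * S - (S - 1)).re ≤ ∑' n, Ccoef a b c d e n * ‖z‖ := h5
      _ = (∑' n, Ccoef a b c d e n) * ‖z‖ := tsum_mul_right
      _ ≤ 1 * ‖z‖ := mul_le_mul_of_nonneg_right hCtsum (norm_nonneg z)
      _ = ‖z‖ := one_mul _
  rw [hderivf]
  have hmul : (1 - z) * S = 1 - (z * S - (S - 1)) := by ring
  rw [hmul, Complex.sub_re, Complex.one_re]
  linarith
end
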